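/- If x₁, x₂ ∈ F₂ satisfy γ(x₁·y) = x₂·γ(y) for all y ∈ F₂, then x₁ = 1 and x₂ = 1. In other words, no nontrivial left translation of F₂ is conjugated by γ to a left translation of F₂. -/

import Mathlib

/-- `F2` is the free group on two generators. -/
abbrev F2 := FreeGroup (Fin 2)

/-- The first generator `a`. -/
def a : F2 := FreeGroup.of 0

/-- The second generator `b`. -/
def b : F2 := FreeGroup.of 1

/-- The automorphism `ι` of `F2` determined by `ι a = a⁻¹` and `ι b = b⁻¹`
(given here as the induced group homomorphism, which is in fact an automorphism). -/
def iota : F2 →* F2 := FreeGroup.lift fun i => (FreeGroup.of i)⁻¹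

/-- `beginsWith ℓ x` means that the reduced word of `x` is nonempty and its first letter
is the generator `ℓ` or its inverse. -/
def beginsWith (ℓ : Fin 2) (x : F2) : Prop :=
  (FreeGroup.toWord x).head?.map Prod.fst = some ℓ

instance (ℓ : Fin 2) (x : F2) : Decidable (beginsWith ℓ x) := by
  unfold beginsWith; infer_instance

/-- The map `γ : F2 → F2`: `γ x = x` if the reduced word of `x` begins with `a` or `a⁻¹`,
and `γ x = ι x` otherwise (in particular `γ 1 = 1`). -/
def gamma (x : F2) : F2 := if beginsWith 0 x then x else iota x

/- ### Auxiliary material -/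

/-- Flip the sign of every letter of a word. -/
def flipW (L : List (Fin 2 × Bool)) : List (Fin 2 × Bool) :=
  L.map fun p => (p.1, !p.2)

lemma flipW_flipW (L : List (Fin 2 × Bool)) : flipW (flipW L) = L := by
  simp [flipW, Function.comp_def]

lemma Step.flipW {L₁ L₂ : List (Fin 2 × Bool)} (h : FreeGroup.Red.Step L₁ L₂) :
    FreeGroup.Red.Step (flipW L₁) (flipW L₂) := by
  cases h with
  | @not L₁ L₂ x bb =>
    cases bb <;> simp [_root_.flipW] <;> exact FreeGroup.Red.Step.not

lemma Red.flipW {L₁ L₂ : List (Fin 2 × Bool)} (h : FreeGroup.Red L₁ L₂) :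
    FreeGroup.Red (flipW L₁) (flipW L₂) :=
  Relation.ReflTransGen.lift _root_.flipW (fun _ _ => Step.flipW) _ _ h

lemma reduce_flipW (w : List (Fin 2 × Bool)) :
    FreeGroup.reduce (flipW w) = flipW (FreeGroup.reduce w) := by
  apply FreeGroup.reduce.min
  have h1 : FreeGroup.Red (flipW (flipW w)) (flipW (FreeGroup.reduce (flipW w))) :=
    Red.flipW FreeGroup.reduce.red
  rw [flipW_flipW] at h1
  have h2 := FreeGroup.Red.reduce_left h1
  have := Red.flipW h2
  rwa [flipW_flipW] at this

lemma iota_mk (L : List (Fin 2 × Bool)) :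
    iota (FreeGroup.mk L) = FreeGroup.mk (flipW L) := by
  induction L with
  | nil => simp [flipW, ← FreeGroup.one_eq_mk]
  | cons p t ih =>
    have : FreeGroup.mk (p :: t) = FreeGroup.mk [p] * FreeGroup.mk t := by
      rw [FreeGroup.mul_mk]; rfl
    rw [this, map_mul, ih]
    have h1 : iota (FreeGroup.mk [p]) = FreeGroup.mk [(p.1, !p.2)] := by
      obtain ⟨i, bb⟩ := p
      cases bb
      · have : FreeGroup.mk [(i, false)] = (FreeGroup.of i)⁻¹ := by
          rw [FreeGroup.of, FreeGroup.inv_mk]; rfl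
        rw [this, map_inv]
        simp [iota, FreeGroup.of, FreeGroup.inv_mk, FreeGroup.invRev]
      · show iota (FreeGroup.of i) = _
        simp [iota, FreeGroup.of, FreeGroup.inv_mk, FreeGroup.invRev]
    rw [h1, FreeGroup.mul_mk]
    rfl

lemma toWord_iota (x : F2) : (iota x).toWord = flipW x.toWord := by
  conv_lhs => rw [← FreeGroup.mk_toWord (x := x)]
  rw [iota_mk, FreeGroup.toWord_mk, reduce_flipW, FreeGroup.reduce_toWord]

lemma iota_fixed {x : F2} (h : iota x = x) : x = 1 := by
  have hw : flipW x.toWord = x.toWord := by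
    rw [← toWord_iota, h]
  rw [← FreeGroup.toWord_eq_nil_iff]
  cases hL : x.toWord with
  | nil => rfl
  | cons p t =>
    exfalso
    obtain ⟨i, bb⟩ := p
    rw [hL] at hw
    have h2 := congrArg List.head? hw
    simp only [flipW, List.map_cons, List.head?_cons, Option.some.injEq, Prod.mk.injEq] at h2
    cases bb <;> simp at h2

lemma iota_a : iota a = a⁻¹ := by simp [iota, a]

lemma iota_b : iota b = b⁻¹ := by simp [iota, b]

lemma gamma_cases (y : F2) : gamma y = y ∨ gamma y = iota y := by
  unfold gamma; split
  · exact Or.inl rfl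
  · exact Or.inr rfl

lemma gamma_a : gamma a = a := by
  unfold gamma
  rw [if_pos]
  unfold beginsWith
  rw [a, FreeGroup.toWord_of]
  rfl

lemma gamma_a_inv : gamma a⁻¹ = a⁻¹ := by
  unfold gamma
  rw [if_pos]
  unfold beginsWith
  rw [FreeGroup.toWord_inv, a, FreeGroup.toWord_of]
  rfl

lemma gamma_b : gamma b = b⁻¹ := by
  unfold gamma
  rw [if_neg, iota_b]
  unfold beginsWith
  rw [b, FreeGroup.toWord_of]
  simp

lemma pow_of_ne_one (i : Fin 2) (n : ℕ) (hn : n ≠ 0) : (FreeGroup.of i : F2) ^ n ≠ 1 := by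
  intro hcon
  have h1 : ((FreeGroup.of i : F2) ^ n).toWord = List.replicate n (i, true) :=
    FreeGroup.toWord_of_pow i n
  rw [hcon, FreeGroup.toWord_one] at h1
  exact hn (by simpa using (congrArg List.length h1).symm)

/-- If `γ` intertwines left translation by `x₁` with left translation by `x₂`, then
`x₁ = 1` and `x₂ = 1`: no nontrivial left translation of `F₂` is conjugated by `γ` to a
left translation. -/
theorem gamma_intertwine_trivial (x₁ x₂ : F2)
    (h : ∀ y : F2, gamma (x₁ * y) = x₂ * gamma y) : x₁ = 1 ∧ x₂ = 1 := by
  -- Step 1: x₁ = x₂, using y = a and y = a⁻¹.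
  have h1 := h a
  have h2 := h a⁻¹
  rw [gamma_a] at h1
  rw [gamma_a_inv] at h2
  have hx12 : x₁ = x₂ := by
    rcases gamma_cases (x₁ * a) with e | e
    · rw [e] at h1; exact mul_right_cancel h1
    · rcases gamma_cases (x₁ * a⁻¹) with f | f
      · rw [f] at h2; exact mul_right_cancel h2
      · exfalso
        rw [e, map_mul, iota_a] at h1
        rw [f, map_mul, map_inv, iota_a, inv_inv] at h2
        have e2 : x₂ = iota x₁ * a⁻¹ * a⁻¹ := by
          rw [h1]; group
        have f2 : x₂ = iota x₁ * a * a := by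
          rw [h2]; group
        have : a⁻¹ * a⁻¹ = a * a := by
          have := e2.symm.trans f2
          rw [mul_assoc, mul_assoc] at this
          exact mul_left_cancel this
        have h4 : (a : F2) ^ 4 = 1 := by
          have h5 : (a : F2) * a * (a * a) = a⁻¹ * a⁻¹ * (a * a) := by rw [this]
          rw [show a⁻¹ * a⁻¹ * ((a : F2) * a) = 1 by group] at h5
          have h6 : (a : F2) ^ 4 = a * a * (a * a) := by
            rw [show (4 : ℕ) = 2 + 2 from rfl, pow_add, pow_two]
          rw [h6]; exact h5
        exact pow_of_ne_one 0 4 (by norm_num) h4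
  -- Step 2: iota x₁ = x₁, using y = b.
  have h3 := h b
  rw [gamma_b, ← hx12] at h3
  have hx1 : x₁ = 1 := by
    rcases gamma_cases (x₁ * b) with e | e
    · exfalso
      rw [e] at h3
      have hb : (b : F2) = b⁻¹ := mul_left_cancel h3
      have h4 : (b : F2) ^ 2 = 1 := by
        have : (b : F2) * b = b⁻¹ * b := by rw [← hb]
        rw [inv_mul_cancel] at this
        rw [pow_two]; exact this
      exact pow_of_ne_one 1 2 (by norm_num) h4
    · rw [e, map_mul, iota_b] at h3
      exact iota_fixed (mul_right_cancel h3)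
  exact ⟨hx1, hx12 ▸ hx1.symm ▸ rfl⟩
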